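/- Let Ω ⊂ ℝⁿ be a bounded domain and let f: Ω → ℝ be uniformly ε₀-continuous on Ω for some ε₀ > 0. Then there exists an extension f̄: Ω̄ → ℝ of f to the closure of Ω such that: (1) f̄|_Ω = f; (2) for every ε > ε₀, f̄ is uniformly ε-continuous on Ω̄; and (3) inf_{Ω̄} f̄ = inf_Ω f and sup_{Ω̄} f̄ = sup_Ω f. -/
import Mathlib


open MeasureTheory Metric Set Filter Topology

noncomputable section

abbrev Eucl (n : ℕ) : Type := EuclideanSpace ℝ (Fin n)

/-- Essential supremum of `p` over the set `A` (w.r.t. Lebesgue measure). -/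
def essSupOn {n : ℕ} (p : Eucl n → ℝ) (A : Set (Eucl n)) : ℝ :=
  essSup p (volume.restrict A)

/-- Essential infimum of `p` over the set `A` (w.r.t. Lebesgue measure). -/
def essInfOn {n : ℕ} (p : Eucl n → ℝ) (A : Set (Eucl n)) : ℝ :=
  essInf p (volume.restrict A)

/-- The Luxemburg norm of `f` on `A` with variable exponent `p`. -/
def luxNorm {n : ℕ} (A : Set (Eucl n)) (p f : Eucl n → ℝ) : ℝ :=
  sInf {l : ℝ | 0 < l ∧ (∫⁻ x in A, ENNReal.ofReal ((|f x| / l) ^ (p x))) ≤ 1}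

/-- `f` belongs to the variable Lebesgue space `L^{p(·)}(A)`. -/
def MemVarLp {n : ℕ} (A : Set (Eucl n)) (p f : Eucl n → ℝ) : Prop :=
  ∃ l : ℝ, 0 < l ∧ (∫⁻ x in A, ENNReal.ofReal ((|f x| / l) ^ (p x))) ≤ 1

/-- `d(x) = dist(x, ∂Ω)`. -/
def bdist {n : ℕ} (Ω : Set (Eucl n)) (x : Eucl n) : ℝ :=
  infDist x (frontier Ω)

/-- The ball `B_{x,τ} = B(x, τ d(x))`. -/
def ballB {n : ℕ} (Ω : Set (Eucl n)) (τ : ℝ) (x : Eucl n) : Set (Eucl n) :=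
  ball x (τ * bdist Ω x)

/-- The boundary log-Hölder condition `∂LH₀^τ(Ω)` with constant `C₀`. -/
def BoundaryLH {n : ℕ} (Ω : Set (Eucl n)) (p : Eucl n → ℝ) (τ C₀ : ℝ) : Prop :=
  ∀ x ∈ Ω, τ * bdist Ω x ≤ 1 / 2 →
    essSupOn p (ballB Ω τ x ∩ Ω) - essInfOn p (ballB Ω τ x ∩ Ω)
      ≤ C₀ / (-Real.log (τ * bdist Ω x))

/-- `Ω` is a John domain with parameter `lam`. -/
def JohnDomain {n : ℕ} (Ω : Set (Eucl n)) (lam : ℝ) : Prop :=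
  ∃ x₀ ∈ Ω, ∀ y ∈ Ω, ∃ ℓ : ℝ, 0 ≤ ℓ ∧ ∃ γ : ℝ → Eucl n,
    γ 0 = y ∧ γ ℓ = x₀ ∧ (∀ t ∈ Icc (0:ℝ) ℓ, γ t ∈ Ω) ∧
    LipschitzOnWith 1 γ (Icc (0:ℝ) ℓ) ∧
    ∀ t ∈ Icc (0:ℝ) ℓ, t ≤ lam * infDist (γ t) (frontier Ω)

/-- `g` is uniformly `ε`-continuous on `S`. -/
def UnifEpsCont {n : ℕ} (S : Set (Eucl n)) (g : Eucl n → ℝ) (ε : ℝ) : Prop :=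
  ∃ δ : ℝ, 0 < δ ∧ ∀ x ∈ S, ∀ y ∈ S, dist x y < δ → |g y - g x| < ε

/-- `f` is locally Lipschitz on `S`. -/
def LocLipschitzOn {n : ℕ} (S : Set (Eucl n)) (f : Eucl n → ℝ) : Prop :=
  ∀ x ∈ S, ∃ K : NNReal, ∃ t ∈ 𝓝 x, LipschitzOnWith K f (t ∩ S)

/-- The average of `f` over `A`. -/
def avgOn {n : ℕ} (A : Set (Eucl n)) (f : Eucl n → ℝ) : ℝ :=
  (volume A).toReal⁻¹ * ∫ x in A, f x

/-- The pointwise dual (conjugate) exponent `p'`, `1/p + 1/p' = 1`. -/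
def dualExp {α : Type*} (p : α → ℝ) : α → ℝ :=
  fun x => p x / (p x - 1)

/-- The norm of the a.e.-defined gradient of `f`. -/
def gradNorm {n : ℕ} (f : Eucl n → ℝ) : Eucl n → ℝ :=
  fun x => ‖fderiv ℝ f x‖

/-- Lemma 7.1, extension of uniformly ε-continuous functions to the closure. -/
theorem extension_eps_continuous
    (n : ℕ) (Ω : Set (Eucl n)) (hΩo : IsOpen Ω) (hΩc : IsConnected Ω)
    (hΩb : Bornology.IsBounded Ω)
    (f : Eucl n → ℝ) (ε₀ : ℝ) (hε₀ : 0 < ε₀) (hf : UnifEpsCont Ω f ε₀) :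
    ∃ fbar : Eucl n → ℝ,
      (∀ x ∈ Ω, fbar x = f x) ∧
      (∀ ε : ℝ, ε₀ < ε → UnifEpsCont (closure Ω) fbar ε) ∧
      sInf (fbar '' closure Ω) = sInf (f '' Ω) ∧
      sSup (fbar '' closure Ω) = sSup (f '' Ω) := by
  classical
  obtain ⟨δ, hδ, hδf⟩ := hf
  obtain ⟨x₀, hx₀⟩ := hΩc.nonempty
  have hpt : ∀ x : Eucl n, ∃ z, z ∈ Ω ∧ (x ∈ closure Ω → dist x z < δ / 4) := by
    intro x
    by_cases hx : x ∈ closure Ω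
    · rw [Metric.mem_closure_iff] at hx
      obtain ⟨z, hz, hdz⟩ := hx (δ / 4) (by positivity)
      exact ⟨z, hz, fun _ => hdz⟩
    · exact ⟨x₀, hx₀, fun h => absurd h hx⟩
  choose g hgΩ hgd using hpt
  have himg : (fun x => if x ∈ Ω then f x else f (g x)) '' closure Ω = f '' Ω := by
    apply subset_antisymm
    · rintro _ ⟨x, hx, rfl⟩
      by_cases hxΩ : x ∈ Ω
      · exact ⟨x, hxΩ, (if_pos hxΩ).symm⟩
      · exact ⟨g x, hgΩ x, (if_neg hxΩ).symm⟩
    · rintro _ ⟨x, hx, rfl⟩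
      exact ⟨x, subset_closure hx, if_pos hx⟩
  refine ⟨fun x => if x ∈ Ω then f x else f (g x), fun x hx => if_pos hx, ?_,
    by rw [himg], by rw [himg]⟩
  intro ε hε
  refine ⟨δ / 4, by positivity, ?_⟩
  intro x hx y hy hxy
  have key : ∀ a ∈ closure Ω, ∃ a' ∈ Ω, dist a a' ≤ δ / 4 ∧
      (if a ∈ Ω then f a else f (g a)) = f a' := by
    intro a ha
    by_cases haΩ : a ∈ Ω
    · exact ⟨a, haΩ, by simp only [dist_self]; positivity, if_pos haΩ⟩
    · exact ⟨g a, hgΩ a, (hgd a ha).le, if_neg haΩ⟩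
  obtain ⟨x', hx', hdx', hfx'⟩ := key x hx
  obtain ⟨y', hy', hdy', hfy'⟩ := key y hy
  simp only [hfx', hfy']
  have hd : dist x' y' < δ := by
    calc dist x' y' ≤ dist x' x + dist x y + dist y y' := dist_triangle4 _ _ _ _
      _ < δ / 4 + δ / 4 + δ / 4 := by
          rw [dist_comm x' x]
          have h1 : dist x x' ≤ δ / 4 := hdx'
          linarith
      _ ≤ δ := by linarith
  exact lt_trans (hδf x' hx' y' hy' hd) hε
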